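/- arXiv:2101.09382 — 4 statements merged into one kernel-verified Lean document; each statement's English description precedes it below -/
import Mathlib

section
/- Critical-path polynomial expansion: for every structure function φ on n components, every index i, and every real p, one has h(1_i,(p,…,p)) − h(0_i,(p,…,p)) = Σ_{r=1}^{n} n_r(i) · p^{r−1} (1−p)^{n−r}, where (p,…,p) is the constant vector. -/
/-- The reliability function (multilinear extension) of a structure function φ. -/
def rel (n : ℕ) (φ : (Fin n → Bool) → Bool) (p : Fin n → ℝ) : ℝ :=
  ∑ x : Fin n → Bool,
    (∏ j : Fin n, if x j then p j else 1 - p j) * (if φ x then 1 else 0)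

/-- The number `n_r(i)` of critical path vectors of size `r` for component `i`:
the sum, over all configurations of the coordinates other than `i` (encoded as
state vectors with `x i = false`) having exactly `r−1` working components among
the coordinates `j ≠ i`, of `φ(1_i,x) − φ(0_i,x)`. -/
def ncrit (n : ℕ) (φ : (Fin n → Bool) → Bool) (i : Fin n) (r : ℕ) : ℤ :=
  ∑ x ∈ Finset.univ.filter (fun x : Fin n → Bool =>
      x i = false ∧
        (Finset.univ.filter (fun j : Fin n => j ≠ i ∧ x j = true)).card = r - 1),
    ((if φ (Function.update x i true) then (1 : ℤ) else 0)
      - (if φ (Function.update x i false) then (1 : ℤ) else 0))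

/-- Critical-path polynomial expansion:
`h(1_i,(p,…,p)) − h(0_i,(p,…,p)) = Σ_{r=1}^{n} n_r(i) · p^{r−1} (1−p)^{n−r}`. -/
theorem critical_path_expansion (n : ℕ) (φ : (Fin n → Bool) → Bool) (i : Fin n)
    (p : ℝ) :
    rel n φ (Function.update (fun _ => p) i 1)
        - rel n φ (Function.update (fun _ => p) i 0)
      = ∑ r ∈ Finset.Icc 1 n,
          (ncrit n φ i r : ℝ) * p ^ (r - 1) * (1 - p) ^ (n - r) := by
  classical
  set Q : (Fin n → Bool) → ℝ :=
    fun x => ∏ j ∈ Finset.univ.erase i, (if x j then p else 1 - p) with hQdef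
  set S : (Fin n → Bool) → ℕ :=
    fun x => (Finset.univ.filter (fun j : Fin n => j ≠ i ∧ x j = true)).card with hSdef
  have hQupd : ∀ (x : Fin n → Bool) (b : Bool), Q (Function.update x i b) = Q x := by
    intro x b
    apply Finset.prod_congr rfl
    intro j hj
    rw [Function.update_of_ne (Finset.ne_of_mem_erase hj)]
  have key : ∀ (b : Bool) (v : ℝ), v = (if b then 1 else 0) →
      rel n φ (Function.update (fun _ => p) i v)
        = ∑ x ∈ Finset.univ.filter (fun x : Fin n → Bool => x i = false),
            Q x * (if φ (Function.update x i b) then 1 else 0) := by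
    intro b v hv
    unfold rel
    have h1 : ∀ x : Fin n → Bool,
        (∏ j : Fin n, if x j then Function.update (fun _ => p) i v j
            else 1 - Function.update (fun _ => p) i v j)
          = (if x i = b then 1 else 0) * Q x := by
      intro x
      rw [← Finset.mul_prod_erase Finset.univ _ (Finset.mem_univ i)]
      congr 1
      · rw [Function.update_self, hv]
        cases b <;> cases hx : x i <;> simp [hx]
      · apply Finset.prod_congr rfl
        intro j hj
        rw [Function.update_of_ne (Finset.ne_of_mem_erase hj)]
    calc
      ∑ x : Fin n → Bool, (∏ j : Fin n, if x j then Function.update (fun _ => p) i v j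
            else 1 - Function.update (fun _ => p) i v j) * (if φ x then 1 else 0)
        = ∑ x : Fin n → Bool,
            (if x i = b then 1 else 0) * (Q x * (if φ x then 1 else 0)) := by
          apply Finset.sum_congr rfl; intro x _; rw [h1 x]; ring
      _ = ∑ x ∈ Finset.univ.filter (fun x : Fin n → Bool => x i = b),
            Q x * (if φ x then 1 else 0) := by
          rw [Finset.sum_filter]
          apply Finset.sum_congr rfl; intro x _
          by_cases hx : x i = b <;> simp [hx]
      _ = ∑ x ∈ Finset.univ.filter (fun x : Fin n → Bool => x i = false),
            Q x * (if φ (Function.update x i b) then 1 else 0) := by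
          apply Finset.sum_nbij' (fun x => Function.update x i false)
            (fun x => Function.update x i b)
          · intro x hx
            simp only [Finset.mem_filter, Finset.mem_univ, true_and] at hx ⊢
            rw [Function.update_self]
          · intro x hx
            simp only [Finset.mem_filter, Finset.mem_univ, true_and] at hx ⊢
            rw [Function.update_self]
          · intro x hx
            simp only [Finset.mem_filter, Finset.mem_univ, true_and] at hx
            rw [Function.update_idem, ← hx, Function.update_eq_self]
          · intro x hx
            simp only [Finset.mem_filter, Finset.mem_univ, true_and] at hx
            rw [Function.update_idem, ← hx, Function.update_eq_self]
          · intro x hx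
            simp only [Finset.mem_filter, Finset.mem_univ, true_and] at hx
            rw [hQupd, Function.update_idem, ← hx, Function.update_eq_self]
  have hn1 : 1 ≤ n := i.pos
  have hSle : ∀ x : Fin n → Bool, S x ≤ n - 1 := by
    intro x
    have hsub : (Finset.univ.filter (fun j : Fin n => j ≠ i ∧ x j = true))
        ⊆ Finset.univ.erase i := by
      intro j hj
      simp only [Finset.mem_filter, Finset.mem_univ, true_and] at hj
      exact Finset.mem_erase.mpr ⟨hj.1, Finset.mem_univ j⟩
    have := Finset.card_le_card hsub
    simpa [Finset.card_erase_of_mem] using this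
  have hQval : ∀ x : Fin n → Bool, Q x = p ^ (S x) * (1 - p) ^ (n - 1 - S x) := by
    intro x
    simp only [hQdef]
    rw [Finset.prod_ite]
    rw [Finset.prod_const, Finset.prod_const]
    congr 1
    · congr 1
      have : (Finset.univ.erase i).filter (fun j => x j = true)
          = Finset.univ.filter (fun j : Fin n => j ≠ i ∧ x j = true) := by
        ext j
        simp [Finset.mem_erase, and_comm]
      rw [this]
    · congr 1
      have hsplit := Finset.card_filter_add_card_filter_not
        (s := Finset.univ.erase i) (p := fun j => x j = true)
      have hcard : (Finset.univ.erase i).card = n - 1 := by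
        simp [Finset.card_erase_of_mem]
      have : (Finset.univ.erase i).filter (fun j => x j = true)
          = Finset.univ.filter (fun j : Fin n => j ≠ i ∧ x j = true) := by
        ext j
        simp [Finset.mem_erase, and_comm]
      rw [this, hcard] at hsplit
      simp only [hSdef]
      omega
  rw [key true 1 (by simp), key false 0 (by simp), ← Finset.sum_sub_distrib]
  have hfib := Finset.sum_fiberwise_of_maps_to
    (s := Finset.univ.filter (fun x : Fin n → Bool => x i = false))
    (t := Finset.Icc 1 n) (g := fun x => S x + 1)
    (fun x _ => by
      simp only [Finset.mem_Icc]
      have := hSle x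
      omega)
    (fun x => Q x * (if φ (Function.update x i true) then 1 else 0)
      - Q x * (if φ (Function.update x i false) then (1:ℝ) else 0))
  rw [← hfib]
  apply Finset.sum_congr rfl
  intro r hr
  simp only [Finset.mem_Icc] at hr
  have hfilter : (Finset.univ.filter (fun x : Fin n → Bool => x i = false)).filter
      (fun x => S x + 1 = r)
      = Finset.univ.filter (fun x : Fin n → Bool =>
          x i = false ∧
            (Finset.univ.filter (fun j : Fin n => j ≠ i ∧ x j = true)).card = r - 1) := by
    rw [Finset.filter_filter]
    apply Finset.filter_congr
    intro x _
    constructor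
    · rintro ⟨h1, h2⟩; simp only [hSdef] at h2; exact ⟨h1, by omega⟩
    · rintro ⟨h1, h2⟩; refine ⟨h1, ?_⟩; simp only [hSdef]; omega
  rw [hfilter, ncrit]
  push_cast
  rw [Finset.sum_mul, Finset.sum_mul]
  apply Finset.sum_congr rfl
  intro x hx
  simp only [Finset.mem_filter, Finset.mem_univ, true_and] at hx
  have hSx : S x = r - 1 := hx.2
  have hQx : Q x = p ^ (r - 1) * (1 - p) ^ (n - r) := by
    rw [hQval x, hSx]
    congr 2
    omega
  rw [hQx]
  ring
end

section
/- Barlow–Proschan importance equals the Shapley-type combinatorial formula: for every structure function φ on n components and every index i, the integral importance I_i^{BP}(φ) = ∫₀¹ (h(1_i,(p,…,p)) − h(0_i,(p,…,p))) dp equals Σ_{r=1}^{n} n_r(i) · (r−1)!(n−r)!/n!. -/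
open Finset

lemma rel_update_eq (n : ℕ) (φ : (Fin n → Bool) → Bool) (i : Fin n)
    (q : Fin n → ℝ) (b : Bool) :
    rel n φ (Function.update q i (if b then 1 else 0))
      = ∑ x ∈ Finset.univ.filter (fun x : Fin n → Bool => x i = false),
          (∏ j ∈ Finset.univ.erase i, if x j then q j else 1 - q j)
            * (if φ (Function.update x i b) then 1 else 0) := by
  rw [rel, ← Finset.sum_filter_add_sum_filter_not Finset.univ (fun x : Fin n → Bool => x i = b)]
  have h2 : ∑ x ∈ Finset.univ.filter (fun x : Fin n → Bool => ¬ x i = b),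
      (∏ j : Fin n, if x j then Function.update q i (if b then 1 else 0) j
        else 1 - Function.update q i (if b then 1 else 0) j) * (if φ x then 1 else 0) = 0 := by
    apply Finset.sum_eq_zero
    intro x hx
    simp only [Finset.mem_filter] at hx
    have : (∏ j : Fin n, if x j then Function.update q i (if b then 1 else 0) j
        else 1 - Function.update q i (if b then 1 else 0) j) = 0 := by
      apply Finset.prod_eq_zero (Finset.mem_univ i)
      rcases Bool.eq_false_or_eq_true b with hb | hb <;>
        rcases Bool.eq_false_or_eq_true (x i) with hxi | hxi <;>
        simp_all
    rw [this, zero_mul]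
  rw [h2, add_zero]
  refine Finset.sum_bij' (fun x _ => Function.update x i false)
    (fun x _ => Function.update x i b) ?_ ?_ ?_ ?_ ?_
  · intro x hx
    simp only [Finset.mem_filter, Finset.mem_univ, true_and] at hx ⊢
    simp
  · intro x hx
    simp only [Finset.mem_filter, Finset.mem_univ, true_and] at hx ⊢
    simp
  · intro x hx
    simp only [Finset.mem_filter, Finset.mem_univ, true_and] at hx
    funext j
    by_cases hj : j = i
    · subst hj; simp [hx]
    · simp [Function.update_of_ne hj]
  · intro x hx
    simp only [Finset.mem_filter, Finset.mem_univ, true_and] at hx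
    funext j
    by_cases hj : j = i
    · subst hj; simp [hx]
    · simp [Function.update_of_ne hj]
  · intro x hx
    simp only [Finset.mem_filter, Finset.mem_univ, true_and] at hx
    have hxu : Function.update (Function.update x i false) i b = x := by
      funext j
      by_cases hj : j = i
      · subst hj; simp [hx]
      · simp [Function.update_of_ne hj]
    rw [hxu]
    congr 1
    rw [← Finset.prod_erase_mul _ _ (Finset.mem_univ i)]
    have hfi : (if x i then Function.update q i (if b then 1 else 0) i
        else 1 - Function.update q i (if b then 1 else 0) i) = 1 := by
      rcases Bool.eq_false_or_eq_true b with hb | hb <;> simp_all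
    rw [hfi, mul_one]
    apply Finset.prod_congr rfl
    intro j hj
    simp only [Finset.mem_erase] at hj
    simp [Function.update_of_ne hj.1]

lemma prod_ite_pow (n : ℕ) (i : Fin n) (x : Fin n → Bool) (p : ℝ) :
    (∏ j ∈ Finset.univ.erase i, if x j then p else 1 - p)
      = p ^ (Finset.univ.filter (fun j : Fin n => j ≠ i ∧ x j = true)).card
        * (1 - p) ^ (n - 1 - (Finset.univ.filter (fun j : Fin n => j ≠ i ∧ x j = true)).card) := by
  rw [Finset.prod_ite, Finset.prod_const, Finset.prod_const]
  have hA : (Finset.univ.erase i).filter (fun j => x j = true)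
      = Finset.univ.filter (fun j : Fin n => j ≠ i ∧ x j = true) := by
    ext j; simp [Finset.mem_erase, and_comm]
  have hcard : ((Finset.univ.erase i).filter (fun j => x j = true)).card
      + ((Finset.univ.erase i).filter (fun j => ¬ x j = true)).card = n - 1 := by
    rw [Finset.card_filter_add_card_filter_not,
      Finset.card_erase_of_mem (Finset.mem_univ i)]
    simp
  rw [hA] at hcard
  rw [hA]
  congr 1
  congr 1
  omega

lemma integrand_eq (n : ℕ) (φ : (Fin n → Bool) → Bool) (i : Fin n) (p : ℝ) :
    rel n φ (Function.update (fun _ => p) i 1) - rel n φ (Function.update (fun _ => p) i 0)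
      = ∑ x ∈ Finset.univ.filter (fun x : Fin n → Bool => x i = false),
          p ^ (Finset.univ.filter (fun j : Fin n => j ≠ i ∧ x j = true)).card
            * (1 - p) ^ (n - 1 - (Finset.univ.filter (fun j : Fin n => j ≠ i ∧ x j = true)).card)
            * ((if φ (Function.update x i true) then (1:ℝ) else 0)
              - (if φ (Function.update x i false) then (1:ℝ) else 0)) := by
  have h1 := rel_update_eq n φ i (fun _ => p) true
  have h0 := rel_update_eq n φ i (fun _ => p) false
  norm_num at h1 h0
  rw [h1, h0, ← Finset.sum_sub_distrib]
  apply Finset.sum_congr rfl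
  intro x hx
  rw [← prod_ite_pow n i x p]
  split_ifs <;> ring

lemma prod_range_eq_div (a k : ℕ) :
    (a.factorial : ℕ) * ∏ j ∈ Finset.range k, (a + 1 + j) = (a + k).factorial := by
  induction k with
  | zero => simp
  | succ k ih =>
    rw [Finset.prod_range_succ, ← mul_assoc, ih]
    rw [show a + (k+1) = (a + k) + 1 by ring, Nat.factorial_succ]
    ring

lemma beta_nat (a b : ℕ) :
    ∫ x in (0:ℝ)..1, x ^ a * (1 - x) ^ b
      = (a.factorial : ℝ) * (b.factorial : ℝ) / ((a + b + 1).factorial : ℝ) := by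
  have h := Complex.betaIntegral_eval_nat_add_one_right (u := (a + 1 : ℂ)) (by simp; positivity) b
  rw [Complex.betaIntegral] at h
  have h2 : (∫ x in (0:ℝ)..1, (x:ℂ) ^ ((a:ℂ)+1-1) * ((1:ℂ)-x) ^ ((b:ℂ)+1-1))
      = ((∫ x in (0:ℝ)..1, x ^ a * (1 - x) ^ b : ℝ) : ℂ) := by
    rw [← intervalIntegral.integral_ofReal]
    apply intervalIntegral.integral_congr
    intro x hx
    simp only [add_sub_cancel_right, Complex.cpow_natCast]
    push_cast
    ring
  rw [h2] at h
  have hfa : ((a.factorial : ℂ)) ≠ 0 := by exact_mod_cast a.factorial_ne_zero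
  have hfab : (((a+b+1).factorial : ℂ)) ≠ 0 := by exact_mod_cast (a+b+1).factorial_ne_zero
  have hprod : (∏ j ∈ Finset.range (b + 1), ((a:ℂ) + 1 + j))
      = ((a+b+1).factorial : ℂ) / (a.factorial : ℂ) := by
    rw [eq_div_iff hfa, mul_comm]
    have := prod_range_eq_div a (b+1)
    rw [show a + (b+1) = a + b + 1 by ring] at this
    exact_mod_cast this
  have key : ((∫ x in (0:ℝ)..1, x ^ a * (1 - x) ^ b : ℝ) : ℂ)
      = ((a.factorial * b.factorial / (a+b+1).factorial : ℝ) : ℂ) := by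
    rw [h, hprod]
    push_cast
    field_simp
  exact_mod_cast key

/-- Barlow–Proschan importance equals the Shapley-type combinatorial formula:
`∫₀¹ (h(1_i,(p,…,p)) − h(0_i,(p,…,p))) dp = Σ_{r=1}^{n} n_r(i)·(r−1)!(n−r)!/n!`. -/
theorem barlow_proschan_eq_shapley (n : ℕ) (φ : (Fin n → Bool) → Bool) (i : Fin n) :
    (∫ p in (0 : ℝ)..1,
        (rel n φ (Function.update (fun _ => p) i 1)
          - rel n φ (Function.update (fun _ => p) i 0)))
      = ∑ r ∈ Finset.Icc 1 n,
          (ncrit n φ i r : ℝ) * (Nat.factorial (r - 1) : ℝ)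
            * (Nat.factorial (n - r) : ℝ) / (Nat.factorial n : ℝ) := by
  have hn : 0 < n := i.pos
  set c : (Fin n → Bool) → ℕ :=
    fun x => (Finset.univ.filter (fun j : Fin n => j ≠ i ∧ x j = true)).card with hc
  set S := Finset.univ.filter (fun x : Fin n → Bool => x i = false) with hS
  set δ : (Fin n → Bool) → ℝ :=
    fun x => (if φ (Function.update x i true) then (1:ℝ) else 0)
      - (if φ (Function.update x i false) then (1:ℝ) else 0) with hδ
  have hcle : ∀ x, c x ≤ n - 1 := by
    intro x
    have : Finset.univ.filter (fun j : Fin n => j ≠ i ∧ x j = true) ⊆ Finset.univ.erase i := by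
      intro j hj
      simp only [Finset.mem_filter] at hj
      exact Finset.mem_erase.mpr ⟨hj.2.1, Finset.mem_univ j⟩
    have := Finset.card_le_card this
    rwa [Finset.card_erase_of_mem (Finset.mem_univ i), Finset.card_univ, Fintype.card_fin] at this
  have step1 : (∫ p in (0 : ℝ)..1,
        (rel n φ (Function.update (fun _ => p) i 1)
          - rel n φ (Function.update (fun _ => p) i 0)))
      = ∑ x ∈ S, ((c x).factorial : ℝ) * ((n - 1 - c x).factorial : ℝ)
          / (n.factorial : ℝ) * δ x := by
    rw [intervalIntegral.integral_congr (g := fun p =>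
      ∑ x ∈ S, p ^ (c x) * (1 - p) ^ (n - 1 - c x) * δ x)
      (fun p _ => integrand_eq n φ i p)]
    rw [intervalIntegral.integral_finset_sum (fun x hx => by
      apply Continuous.intervalIntegrable
      fun_prop)]
    apply Finset.sum_congr rfl
    intro x hx
    rw [intervalIntegral.integral_mul_const, beta_nat]
    have : c x + (n - 1 - c x) + 1 = n := by have := hcle x; omega
    rw [this]
  rw [step1]
  rw [← Finset.sum_fiberwise_of_maps_to (g := fun x => c x + 1) (t := Finset.Icc 1 n)
    (fun x hx => by simp only [Finset.mem_Icc]; have := hcle x; omega)]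
  apply Finset.sum_congr rfl
  intro r hr
  simp only [Finset.mem_Icc] at hr
  have hfib : S.filter (fun x => c x + 1 = r)
      = Finset.univ.filter (fun x : Fin n → Bool => x i = false ∧ c x = r - 1) := by
    rw [hS, Finset.filter_filter]
    apply Finset.filter_congr
    intro x _
    constructor
    · rintro ⟨h1, h2⟩; exact ⟨h1, by omega⟩
    · rintro ⟨h1, h2⟩; exact ⟨h1, by omega⟩
  rw [hfib]
  have hncast : (ncrit n φ i r : ℝ)
      = ∑ x ∈ Finset.univ.filter (fun x : Fin n → Bool => x i = false ∧ c x = r - 1), δ x := by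
    rw [ncrit]
    push_cast
    apply Finset.sum_congr rfl
    intro x _
    show _ = δ x
    rw [hδ]
  rw [hncast, Finset.sum_mul, Finset.sum_mul, Finset.sum_div]
  apply Finset.sum_congr rfl
  intro x hx
  simp only [Finset.mem_filter] at hx
  rw [hx.2.2]
  have : n - 1 - (r - 1) = n - r := by omega
  rw [this]
  ring
end

section
/- Alternative combinatorial representation of the Barlow–Proschan importance: for every structure function φ on n components and every index i, I_i^{BP}(φ) = (1/n) · Σ_{r=1}^{n} n_r(i) · C(n−1, r−1)^{−1}, where C(n−1,r−1) is the binomial coefficient. -/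
open intervalIntegral in
lemma beta_nat_s9 (m : ℕ) : ∀ k : ℕ, ∫ p in (0:ℝ)..1, p ^ k * (1 - p) ^ m
    = (k.factorial * m.factorial : ℝ) / (k + m + 1).factorial := by
  induction m with
  | zero =>
    intro k
    have h : (k.factorial : ℝ) ≠ 0 := by positivity
    simp [integral_pow, Nat.factorial_succ]
    field_simp
  | succ m ih =>
    intro k
    have hk : ((k:ℝ) + 1) ≠ 0 := by positivity
    have hu : ∀ p ∈ Set.uIcc (0:ℝ) 1,
        HasDerivAt (fun q : ℝ => (1 - q) ^ (m + 1))
          (-(((m:ℝ) + 1) * (1 - p) ^ m)) p := by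
      intro p _
      have h := (((hasDerivAt_id p).const_sub 1).pow (m + 1))
      refine h.congr_deriv ?_
      show ((m+1:ℕ):ℝ) * (1 - p) ^ m * -1 = _
      push_cast
      ring
    have hv : ∀ p ∈ Set.uIcc (0:ℝ) 1,
        HasDerivAt (fun q : ℝ => q ^ (k + 1) / ((k:ℝ) + 1)) (p ^ k) p := by
      intro p _
      have h := (hasDerivAt_pow (k + 1) p).div_const ((k:ℝ) + 1)
      refine h.congr_deriv ?_
      show ((k+1:ℕ):ℝ) * p ^ k / ((k:ℝ) + 1) = _
      push_cast
      exact mul_div_cancel_left₀ _ hk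
    have hcont1 : IntervalIntegrable (fun p : ℝ => -(((m:ℝ) + 1) * (1 - p) ^ m))
        MeasureTheory.volume 0 1 := (Continuous.intervalIntegrable (by continuity) _ _)
    have hcont2 : IntervalIntegrable (fun p : ℝ => p ^ k)
        MeasureTheory.volume 0 1 := (Continuous.intervalIntegrable (by continuity) _ _)
    have ibp := integral_mul_deriv_eq_deriv_mul hu hv hcont1 hcont2
    have hre : ∫ x in (0:ℝ)..1, -(((m:ℝ)+1) * (1-x)^m) * (x^(k+1) / ((k:ℝ)+1))
        = - (((m:ℝ)+1)/((k:ℝ)+1) * ∫ x in (0:ℝ)..1, x^(k+1) * (1-x)^m) := by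
      rw [← intervalIntegral.integral_const_mul, ← intervalIntegral.integral_neg]
      apply intervalIntegral.integral_congr
      intro x _
      ring
    rw [hre] at ibp
    have key : ∫ p in (0:ℝ)..1, p ^ k * (1 - p) ^ (m+1)
        = ((m:ℝ)+1) / ((k:ℝ)+1) * ∫ p in (0:ℝ)..1, p ^ (k+1) * (1 - p) ^ m := by
      have h1 : ∀ p ∈ Set.uIcc (0:ℝ) 1, (1 - p) ^ (m+1) * p ^ k = p ^ k * (1 - p) ^ (m+1) :=
        fun p _ => mul_comm _ _
      rw [← intervalIntegral.integral_congr h1, ibp]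
      norm_num
    rw [key, ih (k+1)]
    have e1 : k+1+m+1 = k+m+2 := by omega
    have e2 : k+(m+1)+1 = k+m+2 := by omega
    rw [e1, e2, Nat.factorial_succ k, Nat.factorial_succ m]
    have h2 : ((k+m+2).factorial : ℝ) ≠ 0 := by positivity
    have h3 : (k.factorial : ℝ) ≠ 0 := by positivity
    have h4 : (m.factorial : ℝ) ≠ 0 := by positivity
    push_cast
    field_simp

/-- number of working components other than i -/
def kk (n : ℕ) (i : Fin n) (x : Fin n → Bool) : ℕ :=
  (Finset.univ.filter (fun j : Fin n => j ≠ i ∧ x j = true)).card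

lemma rel_update (n : ℕ) (φ : (Fin n → Bool) → Bool) (i : Fin n) (b : Bool) (p : ℝ) :
    rel n φ (Function.update (fun _ => p) i (if b then (1:ℝ) else 0)) =
    ∑ x ∈ Finset.univ.filter (fun x : Fin n → Bool => x i = false),
      (∏ j ∈ Finset.univ.erase i, if x j then p else 1 - p) *
        (if φ (Function.update x i b) then (1:ℝ) else 0) := by
  classical
  set q : Fin n → ℝ := Function.update (fun _ => p) i (if b then (1:ℝ) else 0) with hqdef
  have hq_i : q i = if b then (1:ℝ) else 0 := Function.update_self _ _ _
  have hq_j : ∀ j : Fin n, j ≠ i → q j = p := fun j hj => Function.update_of_ne hj _ _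
  have hprod : ∀ x : Fin n → Bool,
      (∏ j : Fin n, if x j then q j else 1 - q j)
        = (if x i = b then (1:ℝ) else 0) *
            ∏ j ∈ Finset.univ.erase i, (if x j then p else 1 - p) := by
    intro x
    rw [← Finset.mul_prod_erase Finset.univ _ (Finset.mem_univ i)]
    congr 1
    · rw [hq_i]; cases b <;> cases hx : x i <;> simp [hx]
    · exact Finset.prod_congr rfl fun j hj => by
        rw [hq_j j (Finset.ne_of_mem_erase hj)]
  have step1 : rel n φ q =
      ∑ x ∈ Finset.univ.filter (fun x : Fin n → Bool => x i = b),
        (∏ j ∈ Finset.univ.erase i, (if x j then p else 1 - p)) *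
          (if φ x then (1:ℝ) else 0) := by
    rw [rel, Finset.sum_filter]
    apply Finset.sum_congr rfl
    intro x _
    rw [hprod x]
    by_cases hx : x i = b <;> simp [hx]
  rw [step1]
  refine Finset.sum_bij' (fun x _ => Function.update x i false)
    (fun x _ => Function.update x i b) ?_ ?_ ?_ ?_ ?_
  case refine_1 =>
    intro a ha
    simp
  case refine_2 =>
    intro a ha
    simp
  case refine_3 =>
    intro a ha
    have ha' : a i = b := (Finset.mem_filter.1 ha).2
    beta_reduce
    rw [Function.update_idem, ← ha', Function.update_eq_self]
  case refine_4 =>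
    intro a ha
    have ha' : a i = false := (Finset.mem_filter.1 ha).2
    beta_reduce
    rw [Function.update_idem, ← ha', Function.update_eq_self]
  case refine_5 =>
    intro a ha
    have ha' : a i = b := (Finset.mem_filter.1 ha).2
    beta_reduce
    have hupd : Function.update (Function.update a i false) i b = a := by
      rw [Function.update_idem, ← ha', Function.update_eq_self]
    rw [hupd]
    congr 1
    apply Finset.prod_congr rfl
    intro j hj
    rw [Function.update_of_ne (Finset.ne_of_mem_erase hj)]

lemma kk_card (n : ℕ) (i : Fin n) (x : Fin n → Bool) :
    ((Finset.univ.erase i).filter (fun j => x j = true)).card = kk n i x := by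
  unfold kk
  congr 1
  ext j
  simp [Finset.mem_erase, and_comm]

lemma kk_facts (n : ℕ) (i : Fin n) (x : Fin n → Bool) :
    kk n i x ≤ n - 1 ∧
      ((Finset.univ.erase i).filter (fun j => ¬ x j = true)).card = n - 1 - kk n i x := by
  classical
  have hsum := Finset.card_filter_add_card_filter_not
    (s := Finset.univ.erase i) (p := fun j => x j = true)
  have hc : (Finset.univ.erase i).card = n - 1 := by
    rw [Finset.card_erase_of_mem (Finset.mem_univ i), Finset.card_univ, Fintype.card_fin]
  rw [hc, kk_card] at hsum
  omega

lemma prod_erase_eq (n : ℕ) (i : Fin n) (x : Fin n → Bool) (p : ℝ) :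
    (∏ j ∈ Finset.univ.erase i, if x j then p else 1 - p)
      = p ^ (kk n i x) * (1 - p) ^ (n - 1 - kk n i x) := by
  classical
  rw [← Finset.prod_filter_mul_prod_filter_not (Finset.univ.erase i)
    (fun j => x j = true)]
  congr 1
  · rw [Finset.prod_congr rfl (fun j hj => if_pos (Finset.mem_filter.1 hj).2),
      Finset.prod_const, kk_card]
  · rw [Finset.prod_congr rfl (fun j hj => if_neg (Finset.mem_filter.1 hj).2),
      Finset.prod_const, (kk_facts n i x).2]

/-- Alternative combinatorial representation of the Barlow–Proschan importance:
`I_i^{BP}(φ) = (1/n) · Σ_{r=1}^{n} n_r(i) · C(n−1, r−1)⁻¹`. -/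
theorem barlow_proschan_alt (n : ℕ) (φ : (Fin n → Bool) → Bool) (i : Fin n) :
    (∫ p in (0 : ℝ)..1,
        (rel n φ (Function.update (fun _ => p) i 1)
          - rel n φ (Function.update (fun _ => p) i 0)))
      = (1 / (n : ℝ)) * ∑ r ∈ Finset.Icc 1 n,
          (ncrit n φ i r : ℝ) * ((Nat.choose (n - 1) (r - 1) : ℝ))⁻¹ := by

  have hn : 0 < n := i.pos
  set S : Finset (Fin n → Bool) :=
    Finset.univ.filter (fun x : Fin n → Bool => x i = false) with hS
  -- Step A: pointwise formula for the integrand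
  have stepA : ∀ p : ℝ,
      rel n φ (Function.update (fun _ => p) i 1)
          - rel n φ (Function.update (fun _ => p) i 0)
        = ∑ x ∈ S, p ^ (kk n i x) * (1 - p) ^ (n - 1 - kk n i x) * ((if φ (Function.update x i true) then (1:ℝ) else 0) - (if φ (Function.update x i false) then (1:ℝ) else 0)) := by
    intro p
    have h1 := rel_update n φ i true p
    have h0 := rel_update n φ i false p
    norm_num at h1 h0
    rw [h1, h0, ← Finset.sum_sub_distrib]
    apply Finset.sum_congr rfl
    intro x _
    rw [prod_erase_eq]
    by_cases hA : φ (Function.update x i true) = true <;>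
      by_cases hB : φ (Function.update x i false) = true <;>
        simp only [hA, hB, if_true, if_false, Bool.false_eq_true] <;> ring
  -- Step B: integrate term by term
  have intgr : ∀ x ∈ S, IntervalIntegrable
      (fun p : ℝ => p ^ (kk n i x) * (1 - p) ^ (n - 1 - kk n i x) * ((if φ (Function.update x i true) then (1:ℝ) else 0) - (if φ (Function.update x i false) then (1:ℝ) else 0)))
      MeasureTheory.volume 0 1 := by
    intro x _
    exact (Continuous.intervalIntegrable (by continuity) _ _)
  have stepB : (∫ p in (0 : ℝ)..1,
        (rel n φ (Function.update (fun _ => p) i 1)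
          - rel n φ (Function.update (fun _ => p) i 0)))
      = ∑ x ∈ S,
          ((kk n i x).factorial * (n - 1 - kk n i x).factorial : ℝ)
            / (n.factorial : ℝ) * ((if φ (Function.update x i true) then (1:ℝ) else 0) - (if φ (Function.update x i false) then (1:ℝ) else 0)) := by
    rw [intervalIntegral.integral_congr (g := fun p =>
        ∑ x ∈ S, p ^ (kk n i x) * (1 - p) ^ (n - 1 - kk n i x) * ((if φ (Function.update x i true) then (1:ℝ) else 0) - (if φ (Function.update x i false) then (1:ℝ) else 0)))
        (fun p _ => stepA p)]
    rw [intervalIntegral.integral_finset_sum intgr]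
    apply Finset.sum_congr rfl
    intro x _
    rw [intervalIntegral.integral_mul_const, beta_nat_s9]
    have he : kk n i x + (n - 1 - kk n i x) + 1 = n := by
      have := (kk_facts n i x).1
      omega
    rw [he]
  rw [stepB]
  -- coefficient identity
  have coeff : ∀ x ∈ S,
      ((kk n i x).factorial * (n - 1 - kk n i x).factorial : ℝ) / (n.factorial : ℝ)
        = (1 / (n : ℝ)) * ((Nat.choose (n - 1) (kk n i x) : ℝ))⁻¹ := by
    intro x _
    have hk := (kk_facts n i x).1
    have hid := Nat.choose_mul_factorial_mul_factorial hk
    have hidr : ((Nat.choose (n-1) (kk n i x) : ℝ)) * ((kk n i x).factorial : ℝ)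
        * ((n - 1 - kk n i x).factorial : ℝ) = ((n-1).factorial : ℝ) := by
      exact_mod_cast congrArg (fun t : ℕ => (t : ℝ)) hid
    have hnf : (n.factorial : ℝ) = (n : ℝ) * ((n-1).factorial : ℝ) := by
      rw [← Nat.cast_mul, Nat.mul_factorial_pred hn.ne']
    have h1 : ((Nat.choose (n-1) (kk n i x) : ℝ)) ≠ 0 :=
      Nat.cast_ne_zero.mpr (Nat.choose_pos hk).ne'
    have h2 : ((n:ℝ)) ≠ 0 := by positivity
    have h3 : ((n-1).factorial : ℝ) ≠ 0 := by positivity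
    rw [hnf]
    field_simp
    linear_combination hidr
  rw [Finset.sum_congr rfl (fun x hx => by rw [coeff x hx])]
  -- Step C: regroup the right-hand side by fibers of kk + 1
  have maps : ∀ x ∈ S, kk n i x + 1 ∈ Finset.Icc 1 n := by
    intro x _
    have := (kk_facts n i x).1
    simp only [Finset.mem_Icc]
    omega
  rw [← Finset.sum_fiberwise_of_maps_to maps
    (fun x => (1 / (n : ℝ)) * ((Nat.choose (n - 1) (kk n i x) : ℝ))⁻¹ * ((if φ (Function.update x i true) then (1:ℝ) else 0) - (if φ (Function.update x i false) then (1:ℝ) else 0)))]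
  rw [Finset.mul_sum]
  apply Finset.sum_congr rfl
  intro r hr
  have hr1 : 1 ≤ r := (Finset.mem_Icc.1 hr).1
  have hset : S.filter (fun x => kk n i x + 1 = r)
      = Finset.univ.filter (fun x : Fin n → Bool =>
          x i = false ∧
            (Finset.univ.filter (fun j : Fin n => j ≠ i ∧ x j = true)).card = r - 1) := by
    ext x
    simp only [hS, Finset.mem_filter, Finset.mem_univ, true_and, and_assoc]
    constructor
    · rintro ⟨h1, h2⟩
      refine ⟨h1, ?_⟩
      show kk n i x = r - 1
      omega
    · rintro ⟨h1, h2⟩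
      refine ⟨h1, ?_⟩
      have : kk n i x = r - 1 := h2
      omega
  rw [ncrit]
  rw [← hset]
  push_cast
  rw [Finset.sum_mul, Finset.mul_sum]
  apply Finset.sum_congr rfl
  intro x hx
  have hxk : kk n i x = r - 1 := by
    have := (Finset.mem_filter.1 hx).2
    omega
  rw [hxk]
  ring
end

section
/- A series component has maximal structural Birnbaum importance: let φ be a structure function on n components such that φ(x) = x_k ∧ ψ(x) for some component k and some map ψ : {0,1}^n → {0,1} that does not depend on the k-th coordinate. Then for every component i, the structural Birnbaum importance satisfies 2^{−n} Σ_{x ∈ {0,1}^n} δ_i(x) ≤ 2^{−n} Σ_{x ∈ {0,1}^n} δ_k(x), i.e. ∂h/∂p_i ≤ ∂h/∂p_k at p = (1/2, …, 1/2). -/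
/-- The pivotal difference δ_i(x) = φ(1_i,x) − φ(0_i,x), computed in ℤ. -/
def delta (n : ℕ) (φ : (Fin n → Bool) → Bool) (i : Fin n) (x : Fin n → Bool) : ℤ :=
  (if φ (Function.update x i true) then 1 else 0)
    - (if φ (Function.update x i false) then 1 else 0)

/-- Flipping the `i`-th coordinate, as a permutation of the cube. -/
def flipAt (n : ℕ) (i : Fin n) : Equiv.Perm (Fin n → Bool) :=
  Function.Involutive.toPerm (fun x => Function.update x i (!(x i)))
    (by
      intro x; funext j
      by_cases h : j = i
      · subst h; simp
      · simp [Function.update_of_ne h])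

/-- A series component has maximal structural Birnbaum importance: if
`φ(x) = x_k ∧ ψ(x)` where ψ does not depend on the k-th coordinate, then for
every component i the structural Birnbaum importance
`2^{−n} Σ_x δ_i(x)` is at most `2^{−n} Σ_x δ_k(x)`. -/
theorem series_component_max_importance (n : ℕ)
    (φ ψ : (Fin n → Bool) → Bool) (k : Fin n)
    (hφ : ∀ x, φ x = (x k && ψ x))
    (hψ : ∀ (x : Fin n → Bool) (b : Bool), ψ (Function.update x k b) = ψ x) :
    ∀ i : Fin n,
      ((2 : ℝ) ^ n)⁻¹ * ∑ x : Fin n → Bool, (delta n φ i x : ℝ)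
        ≤ ((2 : ℝ) ^ n)⁻¹ * ∑ x : Fin n → Bool, (delta n φ k x : ℝ) := by
  intro i
  have hZ : (∑ x : Fin n → Bool, delta n φ i x) ≤ ∑ x : Fin n → Bool, delta n φ k x := by
    -- delta at k is just the indicator of ψ
    have hdk : ∀ x, delta n φ k x = (if ψ x then 1 else 0) := by
      intro x
      simp [delta, hφ, hψ]
    by_cases hik : i = k
    · subst hik; exact le_refl _
    -- pointwise value of delta at i
    have hdi : ∀ x, delta n φ i x =
        (if x k then 1 else 0) *
          ((if ψ (Function.update x i true) then 1 else 0)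
            - (if ψ (Function.update x i false) then (1:ℤ) else 0)) := by
      intro x
      have hk : ∀ b, Function.update x i b k = x k := fun b =>
        Function.update_of_ne (Ne.symm (by simpa using fun h => hik (by exact h))) _ _
      simp only [delta, hφ, hk]
      cases h : x k <;> simp
    -- prove 2 * sums compare
    have key : 2 * (∑ x : Fin n → Bool, delta n φ i x)
        ≤ 2 * (∑ x : Fin n → Bool, delta n φ k x) := by
      have sumI : 2 * (∑ x : Fin n → Bool, delta n φ i x)
          = ∑ x : Fin n → Bool,
              ((if ψ (Function.update x i true) then 1 else 0)
                - (if ψ (Function.update x i false) then (1:ℤ) else 0)) := by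
        have hcomp := Equiv.sum_comp (flipAt n k) (delta n φ i)
        have : 2 * (∑ x : Fin n → Bool, delta n φ i x)
            = ∑ x : Fin n → Bool, (delta n φ i x + delta n φ i (flipAt n k x)) := by
          rw [Finset.sum_add_distrib, hcomp]; ring
        rw [this]
        refine Finset.sum_congr rfl fun x _ => ?_
        have hflip : ∀ b : Bool, ψ (Function.update (flipAt n k x) i b)
            = ψ (Function.update x i b) := by
          intro b
          show ψ (Function.update (Function.update x k (!(x k))) i b) = _
          rw [Function.update_comm (Ne.symm hik), hψ]
        have hkc : (flipAt n k x) k = !(x k) := by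
          show Function.update x k (!(x k)) k = _
          simp
        rw [hdi x, hdi (flipAt n k x), hflip true, hflip false, hkc]
        cases x k <;> simp
      have sumK : 2 * (∑ x : Fin n → Bool, delta n φ k x)
          = ∑ x : Fin n → Bool,
              ((if ψ (Function.update x i true) then 1 else 0)
                + (if ψ (Function.update x i false) then (1:ℤ) else 0)) := by
        have hcomp := Equiv.sum_comp (flipAt n i) (delta n φ k)
        have : 2 * (∑ x : Fin n → Bool, delta n φ k x)
            = ∑ x : Fin n → Bool, (delta n φ k x + delta n φ k (flipAt n i x)) := by
          rw [Finset.sum_add_distrib, hcomp]; ring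
        rw [this]
        refine Finset.sum_congr rfl fun x _ => ?_
        have hx : ψ x = ψ (Function.update x i (x i)) := by
          rw [Function.update_eq_self]
        have hfx : (flipAt n i x) = Function.update x i (!(x i)) := rfl
        rw [hdk x, hdk (flipAt n i x), hfx, hx]
        cases x i <;> simp [add_comm]
      rw [sumI, sumK]
      refine Finset.sum_le_sum fun x _ => ?_
      have h1 : (0:ℤ) ≤ (if ψ (Function.update x i false) then (1:ℤ) else 0) := by positivity
      linarith
    linarith
  have hpos : (0:ℝ) ≤ ((2:ℝ) ^ n)⁻¹ := by positivity
  apply mul_le_mul_of_nonneg_left _ hpos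
  exact_mod_cast hZ
end
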